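/- Let k, m ≥ 1 be integers and let T₁, …, T_m be random variables on a common probability space such that each T_i is the sum of at most k independent exponentially distributed random variables of rate 1 (independence is required only within each sum, not across different i). Then E[max(T₁, …, T_m)] ≤ 2·k + 2·ln m + 2. In particular, if m ≤ c^k for a constant c > 1, then E[max(T₁, …, T_m)] = O(k). -/

import Mathlib

open MeasureTheory ProbabilityTheory
open scoped ENNReal

/-- Auxiliary: the exponential moment `E[exp(Y/2)]` of a rate-1 exponential
random variable is at most `2` (in fact it equals `2`). -/
lemma aux_lintegral_exp_half_le {Ω : Type*} [MeasurableSpace Ω] (μ : Measure Ω)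
    [IsProbabilityMeasure μ] (Y : Ω → ℝ) (hY : Measurable Y)
    (htail : ∀ t : ℝ, 0 ≤ t → μ {ω | t < Y ω} = ENNReal.ofReal (Real.exp (-t))) :
    ∫⁻ ω, ENNReal.ofReal (Real.exp ((1/2) * Y ω)) ∂μ ≤ 2 := by
  rw [lintegral_eq_lintegral_meas_lt μ (ae_of_all _ fun ω => (Real.exp_pos _).le)
    ((hY.const_mul _).exp.aemeasurable)]
  rw [← Set.Ioc_union_Ioi_eq_Ioi (zero_le_one (α := ℝ)),
    lintegral_union measurableSet_Ioi (Set.Ioc_disjoint_Ioi le_rfl)]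
  have h1 : ∫⁻ s in Set.Ioc (0:ℝ) 1, μ {a | s < Real.exp ((1/2) * Y a)} ≤ 1 := by
    calc ∫⁻ s in Set.Ioc (0:ℝ) 1, μ {a | s < Real.exp ((1/2) * Y a)}
        ≤ ∫⁻ _ in Set.Ioc (0:ℝ) 1, 1 := lintegral_mono fun s => prob_le_one
      _ = 1 := by rw [setLIntegral_one, Real.volume_Ioc]; norm_num
  have h2 : ∫⁻ s in Set.Ioi (1:ℝ), μ {a | s < Real.exp ((1/2) * Y a)} ≤ 1 := by
    have heq : ∀ s ∈ Set.Ioi (1:ℝ),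
        μ {a | s < Real.exp ((1/2) * Y a)} = ENNReal.ofReal (s ^ (-2 : ℝ)) := by
      intro s hs
      have hs1 : (1:ℝ) < s := hs
      have hs0 : (0:ℝ) < s := by linarith
      have hlog : 0 ≤ Real.log s := Real.log_nonneg hs1.le
      have hset : {a | s < Real.exp ((1/2) * Y a)} = {a | 2 * Real.log s < Y a} := by
        ext a
        simp only [Set.mem_setOf_eq]
        rw [← Real.log_lt_iff_lt_exp hs0]
        constructor <;> intro h <;> linarith
      rw [hset, htail _ (by linarith)]
      congr 1
      rw [Real.rpow_def_of_pos hs0]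
      ring_nf
    rw [setLIntegral_congr_fun measurableSet_Ioi heq]
    rw [← MeasureTheory.ofReal_integral_eq_lintegral_ofReal
      (integrableOn_Ioi_rpow_of_lt (by norm_num) one_pos)
      ((ae_restrict_iff' measurableSet_Ioi).2 (ae_of_all _ fun s hs =>
        Real.rpow_nonneg (le_of_lt (lt_trans one_pos hs)) _))]
    rw [integral_Ioi_rpow_of_lt (by norm_num) one_pos]
    norm_num
  exact le_trans (add_le_add h1 h2) (by norm_num)

/-- Auxiliary Chernoff bound: the tail of a sum of at most `k` independent rate-1
exponential random variables is at most `2^k * exp (-t/2)`. -/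
lemma aux_tail_sum_le {Ω : Type*} [MeasurableSpace Ω] (μ : Measure Ω)
    [IsProbabilityMeasure μ] (k ki : ℕ) (hki : ki ≤ k)
    (Y : Fin ki → Ω → ℝ) (hYm : ∀ l, Measurable (Y l))
    (hind : iIndepFun Y μ)
    (htail : ∀ (l : Fin ki) (t : ℝ), 0 ≤ t →
      μ {ω | t < Y l ω} = ENNReal.ofReal (Real.exp (-t)))
    (t : ℝ) :
    μ {ω | t < ∑ l, Y l ω} ≤ ENNReal.ofReal (2 ^ k * Real.exp (-(t/2))) := by
  have hint : ∀ l, Integrable (fun ω => Real.exp ((1/2) * Y l ω)) μ := by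
    intro l
    refine ⟨(((hYm l).const_mul _).exp).aestronglyMeasurable, ?_⟩
    rw [hasFiniteIntegral_iff_ofReal (ae_of_all _ fun ω => (Real.exp_pos _).le)]
    exact lt_of_le_of_lt (aux_lintegral_exp_half_le μ (Y l) (hYm l) (htail l))
      (by norm_num)
  have hmgf : ∀ l, mgf (Y l) μ (1/2) ≤ 2 := by
    intro l
    have h1 : mgf (Y l) μ (1/2)
        = (∫⁻ ω, ENNReal.ofReal (Real.exp ((1/2) * Y l ω)) ∂μ).toReal := by
      rw [mgf, integral_eq_lintegral_of_nonneg_ae (ae_of_all _ fun ω => (Real.exp_pos _).le)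
        (((hYm l).const_mul _).exp).aestronglyMeasurable]
    rw [h1]
    refine ENNReal.toReal_le_of_le_ofReal (by norm_num) ?_
    have := aux_lintegral_exp_half_le μ (Y l) (hYm l) (htail l)
    rwa [show ((2:ℝ≥0∞)) = ENNReal.ofReal 2 by norm_num] at this
  have hintsum : Integrable (fun ω => Real.exp ((1/2) * (∑ l, Y l) ω)) μ :=
    hind.integrable_exp_mul_sum hYm (fun l _ => hint l)
  have hchern := measure_ge_le_exp_mul_mgf (μ := μ) (X := ∑ l, Y l) t
    (by norm_num : (0:ℝ) ≤ 1/2) hintsum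
  have hprod : mgf (∑ l, Y l) μ (1/2) ≤ 2 ^ k := by
    rw [hind.mgf_sum hYm Finset.univ]
    calc ∏ l, mgf (Y l) μ (1/2) ≤ ∏ l : Fin ki, (2:ℝ) :=
        Finset.prod_le_prod (fun l _ => mgf_nonneg) (fun l _ => hmgf l)
      _ = 2 ^ ki := by simp
      _ ≤ 2 ^ k := pow_le_pow_right₀ one_le_two hki
  calc μ {ω | t < ∑ l, Y l ω} ≤ μ {ω | t ≤ (∑ l, Y l) ω} := by
        apply measure_mono
        intro ω hω
        have : t < ∑ l, Y l ω := hω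
        simpa using this.le
    _ = ENNReal.ofReal ((μ {ω | t ≤ (∑ l, Y l) ω}).toReal) :=
        (ENNReal.ofReal_toReal (measure_ne_top _ _)).symm
    _ ≤ ENNReal.ofReal (2 ^ k * Real.exp (-(t/2))) := by
        apply ENNReal.ofReal_le_ofReal
        refine hchern.trans ?_
        have hexp : Real.exp (-(1/2) * t) = Real.exp (-(t/2)) := by ring_nf
        calc Real.exp (-(1/2)*t) * mgf (∑ l, Y l) μ (1/2)
            ≤ Real.exp (-(1/2)*t) * 2 ^ k :=
              mul_le_mul_of_nonneg_left hprod (Real.exp_pos _).le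
          _ = 2 ^ k * Real.exp (-(t/2)) := by rw [hexp]; ring

/-- Probabilistic content of the paper's Lemma 2.1: if each of `T 1, …, T m` is a
sum of at most `k` independent rate-1 exponential random variables, then the
expected value of their maximum is at most `2k + 2 ln m + 2`. -/
theorem expectation_max_sums_of_exponentials
    {Ω : Type*} [MeasurableSpace Ω] (μ : Measure Ω) [IsProbabilityMeasure μ]
    (k m : ℕ) (hk : 1 ≤ k) (hm : 1 ≤ m)
    (T : Fin m → Ω → ℝ)
    (hT : ∀ i : Fin m, ∃ (ki : ℕ), ki ≤ k ∧ ∃ Y : Fin ki → Ω → ℝ,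
      (∀ l, Measurable (Y l)) ∧
      iIndepFun Y μ ∧
      (∀ (l : Fin ki) (t : ℝ), 0 ≤ t →
        μ {ω | t < Y l ω} = ENNReal.ofReal (Real.exp (-t))) ∧
      T i = fun ω => ∑ l : Fin ki, Y l ω) :
    ∫ ω, (⨆ i : Fin m, T i ω) ∂μ ≤ 2 * k + 2 * Real.log m + 2 := by
  haveI : Nonempty (Fin m) := ⟨⟨0, hm⟩⟩
  set M : Ω → ℝ := fun ω => ⨆ i : Fin m, T i ω with hMdef
  have hTm : ∀ i, Measurable (T i) := by
    intro i
    obtain ⟨ki, hki, Y, hYm, hind, htail, hTeq⟩ := hT i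
    rw [hTeq]
    exact Finset.measurable_sum _ fun l _ => hYm l
  have hTnn : ∀ i, 0 ≤ᵐ[μ] T i := by
    intro i
    obtain ⟨ki, hki, Y, hYm, hind, htail, hTeq⟩ := hT i
    have hY : ∀ l, 0 ≤ᵐ[μ] Y l := by
      intro l
      have h0 : μ {ω | 0 < Y l ω} = 1 := by simpa using htail l 0 le_rfl
      have hc : μ {ω | 0 < Y l ω}ᶜ = 0 :=
        (prob_compl_eq_zero_iff (measurableSet_lt measurable_const (hYm l))).2 h0
      have hae : ∀ᵐ ω ∂μ, 0 < Y l ω := by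
        rw [ae_iff]
        have hset : {ω | ¬ 0 < Y l ω} = {ω | 0 < Y l ω}ᶜ := by ext ω; simp
        rw [hset]; exact hc
      exact hae.mono fun ω h => h.le
    rw [hTeq]
    have hall := (MeasureTheory.ae_all_iff).2 hY
    exact hall.mono fun ω h => Finset.sum_nonneg fun l _ => h l
  have hMm : Measurable M := Measurable.iSup hTm
  have hMnn : 0 ≤ᵐ[μ] M := by
    refine (hTnn ⟨0, hm⟩).mono fun ω h => ?_
    exact h.trans (le_ciSup (f := fun i => T i ω) ((Set.finite_range _).bddAbove) ⟨0, hm⟩)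
  have hTail : ∀ (i : Fin m) (t : ℝ),
      μ {ω | t < T i ω} ≤ ENNReal.ofReal (2 ^ k * Real.exp (-(t/2))) := by
    intro i t
    obtain ⟨ki, hki, Y, hYm, hind, htail, hTeq⟩ := hT i
    rw [hTeq]
    exact aux_tail_sum_le μ k ki hki Y hYm hind htail t
  have hMtail : ∀ t : ℝ,
      μ {ω | t < M ω} ≤ ENNReal.ofReal ((m : ℝ) * (2 ^ k * Real.exp (-(t/2)))) := by
    intro t
    have hsub : {ω | t < M ω} ⊆ ⋃ i, {ω | t < T i ω} := by
      intro ω hω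
      have hω' : t < ⨆ i : Fin m, T i ω := hω
      obtain ⟨i, hi⟩ := (lt_ciSup_iff (f := fun i => T i ω)
        ((Set.finite_range _).bddAbove)).1 hω'
      exact Set.mem_iUnion.2 ⟨i, hi⟩
    calc μ {ω | t < M ω} ≤ ∑' i, μ {ω | t < T i ω} :=
          (measure_mono hsub).trans (measure_iUnion_le _)
      _ = ∑ i, μ {ω | t < T i ω} := tsum_fintype _
      _ ≤ ∑ _i : Fin m, ENNReal.ofReal (2 ^ k * Real.exp (-(t/2))) :=
          Finset.sum_le_sum fun i _ => hTail i t
      _ = ENNReal.ofReal ((m : ℝ) * (2 ^ k * Real.exp (-(t/2)))) := by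
          rw [Finset.sum_const, Finset.card_univ, Fintype.card_fin, nsmul_eq_mul,
            ENNReal.ofReal_mul (p := (m:ℝ)) (by positivity), ENNReal.ofReal_natCast]
  set C : ℝ := (m : ℝ) * 2 ^ k with hCdef
  have hm' : (1:ℝ) ≤ (m : ℝ) := by exact_mod_cast hm
  have h2k : (1:ℝ) ≤ 2 ^ k := by simpa using pow_le_pow_right₀ one_le_two (Nat.zero_le k)
  have hC1 : (1:ℝ) ≤ C := by nlinarith
  have hC0 : (0:ℝ) < C := lt_of_lt_of_le one_pos hC1
  set a : ℝ := 2 * Real.log C with hadef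
  have ha : 0 ≤ a := mul_nonneg (by norm_num) (Real.log_nonneg hC1)
  have hgoal : ∫ ω, M ω ∂μ ≤ 2 * k + 2 * Real.log m + 2 := by
    rw [integral_eq_lintegral_of_nonneg_ae hMnn hMm.aestronglyMeasurable]
    have key : ∫⁻ ω, ENNReal.ofReal (M ω) ∂μ ≤ ENNReal.ofReal (a + 2) := by
      rw [lintegral_eq_lintegral_meas_lt μ hMnn hMm.aemeasurable]
      rw [← Set.Ioc_union_Ioi_eq_Ioi ha,
        lintegral_union measurableSet_Ioi (Set.Ioc_disjoint_Ioi le_rfl)]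
      have h1 : ∫⁻ t in Set.Ioc (0:ℝ) a, μ {ω | t < M ω} ≤ ENNReal.ofReal a := by
        calc ∫⁻ t in Set.Ioc (0:ℝ) a, μ {ω | t < M ω}
            ≤ ∫⁻ _ in Set.Ioc (0:ℝ) a, 1 := lintegral_mono fun t => prob_le_one
          _ = ENNReal.ofReal a := by rw [setLIntegral_one, Real.volume_Ioc, sub_zero]
      have hIexp : ∫ t in Set.Ioi a, Real.exp (-(1/2) * t)
          = 2 * Real.exp (-(1/2) * a) := by
        have hderiv : ∀ x ∈ Set.Ici a,
            HasDerivAt (fun t => -2 * Real.exp (-(1/2) * t)) (Real.exp (-(1/2) * x)) x := by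
          intro x _
          have h := (((hasDerivAt_id x).const_mul (-(1/2) : ℝ)).exp).const_mul (-2 : ℝ)
          refine h.congr_deriv ?_
          simp only [id_eq]
          ring
        have htend : Filter.Tendsto (fun t => -2 * Real.exp (-(1/2) * t))
            Filter.atTop (nhds 0) := by
          have h1 : Filter.Tendsto (fun t : ℝ => -(1/2) * t) Filter.atTop Filter.atBot :=
            (Filter.tendsto_const_mul_atBot_of_neg (by norm_num)).2 Filter.tendsto_id
          have h2 := (Real.tendsto_exp_atBot.comp h1).const_mul (-2 : ℝ)
          simpa using h2
        have := integral_Ioi_of_hasDerivAt_of_tendsto' hderiv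
          (exp_neg_integrableOn_Ioi a (by norm_num : (0:ℝ) < 1/2)) htend
        rw [this]; ring
      have h2 : ∫⁻ t in Set.Ioi a, μ {ω | t < M ω} ≤ ENNReal.ofReal 2 := by
        have hb : ∀ t ∈ Set.Ioi a,
            μ {ω | t < M ω} ≤ ENNReal.ofReal (C * Real.exp (-(1/2) * t)) := by
          intro t _
          refine (hMtail t).trans (ENNReal.ofReal_le_ofReal (le_of_eq ?_))
          rw [hCdef]
          ring_nf
        have hInt : IntegrableOn (fun t => C * Real.exp (-(1/2) * t)) (Set.Ioi a) :=
          (exp_neg_integrableOn_Ioi a (by norm_num : (0:ℝ) < 1/2)).const_mul C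
        calc ∫⁻ t in Set.Ioi a, μ {ω | t < M ω}
            ≤ ∫⁻ t in Set.Ioi a, ENNReal.ofReal (C * Real.exp (-(1/2) * t)) :=
              setLIntegral_mono' measurableSet_Ioi hb
          _ = ENNReal.ofReal (∫ t in Set.Ioi a, C * Real.exp (-(1/2) * t)) :=
              (MeasureTheory.ofReal_integral_eq_lintegral_ofReal hInt
                (ae_of_all _ fun t => by positivity)).symm
          _ = ENNReal.ofReal 2 := by
              rw [MeasureTheory.integral_const_mul, hIexp]
              congr 1
              have hea : Real.exp (-(1/2) * a) = C⁻¹ := by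
                rw [hadef, show -(1/2) * (2 * Real.log C) = -Real.log C by ring,
                  Real.exp_neg, Real.exp_log hC0]
              rw [hea]
              field_simp
      exact le_trans (add_le_add h1 h2)
        (le_of_eq (ENNReal.ofReal_add ha (by norm_num)).symm)
    have hfinal : a + 2 ≤ 2 * k + 2 * Real.log m + 2 := by
      have hlogC : Real.log C = Real.log m + k * Real.log 2 := by
        rw [hCdef, Real.log_mul (by positivity) (by positivity), Real.log_pow]
      have hlog2 : Real.log 2 ≤ 1 := by
        have := Real.log_le_sub_one_of_pos (by norm_num : (0:ℝ) < 2)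
        linarith
      have hk' : (1:ℝ) ≤ (k : ℝ) := by exact_mod_cast hk
      have hlogm : 0 ≤ Real.log m := Real.log_nonneg hm'
      rw [hadef, hlogC]
      nlinarith [Real.log_nonneg (show (1:ℝ) ≤ 2 by norm_num)]
    exact le_trans (ENNReal.toReal_le_of_le_ofReal (by linarith) key) hfinal
  exact hgoal
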